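/- Let q be a positive integer, w, s complex numbers with Re(s) large enough for absolute convergence. Then ∑_{n=1}^∞ (σ_w(n)/n^s) ∑_{d | gcd(n,q)} μ(q/d) d = ζ(s) ζ(s − w) ∑_{c | q} μ(c) c^{1+w−2s} ∑_{d | q/c} μ(q/(cd)) d^{1−s} σ_w(d). -/

import Mathlib

open ArithmeticFunction LSeries Finset
open scoped LSeries.notation

/-- The generalized divisor function with complex exponent. -/
noncomputable def sigmaC (w : ℂ) (m : ℕ) : ℂ := ∑ d ∈ m.divisors, (d : ℂ) ^ w


lemma sigmaC_zero (w : ℂ) : sigmaC w 0 = 0 := by simp [sigmaC]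

lemma sigmaC_eq_conv (w : ℂ) :
    sigmaC w = (fun _ : ℕ => (1 : ℂ)) ⍟ (fun n : ℕ => (n : ℂ) ^ w) := by
  funext n
  rw [LSeries.convolution_def]
  simp only [one_mul]
  rw [← Nat.map_div_left_divisors, Finset.sum_map]
  rfl

lemma gcd_divisors {a : ℕ} (ha : a ≠ 0) (b : ℕ) :
    (Nat.gcd a b).divisors = a.divisors.filter (· ∣ b) := by
  ext d
  simp only [Nat.mem_divisors, Finset.mem_filter, Nat.dvd_gcd_iff]
  constructor
  · rintro ⟨⟨h1, h2⟩, _⟩; exact ⟨⟨h1, ha⟩, h2⟩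
  · rintro ⟨⟨h1, _⟩, h2⟩
    exact ⟨⟨h1, h2⟩, fun h => ha (Nat.eq_zero_of_gcd_eq_zero_left h)⟩

lemma sum_moebius_divisors (g : ℕ) :
    (∑ e ∈ g.divisors, ((moebius e : ℤ) : ℂ)) = if g = 1 then 1 else 0 := by
  have h := congrArg (fun f : ArithmeticFunction ℤ => f g) moebius_mul_coe_zeta
  simp only [coe_mul_zeta_apply, one_apply] at h
  have : (∑ e ∈ g.divisors, ((moebius e : ℤ) : ℂ))
      = ((∑ e ∈ g.divisors, (moebius e : ℤ) : ℤ) : ℂ) := by push_cast; rfl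
  rw [this, h]
  split <;> simp

lemma sigmaC_step1 (w : ℂ) {m n : ℕ} (hm : m ≠ 0) (hn : n ≠ 0) :
    sigmaC w (m * n) = ∑ p ∈ (m.divisors ×ˢ n.divisors).filter
        (fun p => Nat.Coprime (m / p.1) p.2), (p.1 : ℂ) ^ w * (p.2 : ℂ) ^ w := by
  rw [sigmaC]
  refine Finset.sum_nbij' (i := fun k => (Nat.gcd k m, k / Nat.gcd k m))
    (j := fun p => p.1 * p.2) ?_ ?_ ?_ ?_ ?_
  · rintro k hk
    rw [Nat.mem_divisors] at hk
    obtain ⟨hkdvd, hmn⟩ := hk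
    have hk0 : k ≠ 0 := by rintro rfl; exact hmn (zero_dvd_iff.mp hkdvd)
    have ha0 : Nat.gcd k m ≠ 0 := fun h => hk0 (Nat.eq_zero_of_gcd_eq_zero_left h)
    have hak : Nat.gcd k m ∣ k := Nat.gcd_dvd_left k m
    have ham : Nat.gcd k m ∣ m := Nat.gcd_dvd_right k m
    have hcop : Nat.Coprime (k / Nat.gcd k m) (m / Nat.gcd k m) :=
      Nat.coprime_div_gcd_div_gcd (Nat.pos_of_ne_zero ha0)
    have hbn : k / Nat.gcd k m ∣ n := by
      have h1 : k / Nat.gcd k m ∣ (m / Nat.gcd k m) * n := by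
        have hkk : Nat.gcd k m * (k / Nat.gcd k m) ∣ Nat.gcd k m * ((m / Nat.gcd k m) * n) := by
          rw [Nat.mul_div_cancel' hak, ← mul_assoc, Nat.mul_div_cancel' ham]
          exact hkdvd
        exact (mul_dvd_mul_iff_left ha0).mp hkk
      exact hcop.dvd_of_dvd_mul_left h1
    simp only [Finset.mem_filter, Finset.mem_product, Nat.mem_divisors]
    exact ⟨⟨⟨ham, hm⟩, ⟨hbn, hn⟩⟩, hcop.symm⟩
  · rintro ⟨a, b⟩ hab
    simp only [Finset.mem_filter, Finset.mem_product, Nat.mem_divisors] at hab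
    exact Nat.mem_divisors.mpr ⟨mul_dvd_mul hab.1.1.1 hab.1.2.1, mul_ne_zero hm hn⟩
  · intro k hk
    exact Nat.mul_div_cancel' (Nat.gcd_dvd_left k m)
  · rintro ⟨a, b⟩ hab
    simp only [Finset.mem_filter, Finset.mem_product, Nat.mem_divisors] at hab
    obtain ⟨⟨⟨ham, _⟩, ⟨hbn, _⟩⟩, hcop⟩ := hab
    have ha0 : a ≠ 0 := by rintro rfl; exact hm (zero_dvd_iff.mp ham)
    have hg : Nat.gcd (a * b) m = a := by
      conv_lhs => rw [← Nat.mul_div_cancel' ham]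
      rw [Nat.gcd_mul_left, Nat.Coprime.gcd_eq_one hcop.symm, mul_one]
    simp only [hg, Nat.mul_div_cancel_left _ (Nat.pos_of_ne_zero ha0)]
  · intro k hk
    have hak : Nat.gcd k m ∣ k := Nat.gcd_dvd_left k m
    conv_lhs => rw [← Nat.mul_div_cancel' hak]
    push_cast
    rw [Complex.natCast_mul_natCast_cpow]

lemma sigmaC_mul (w : ℂ) {m n : ℕ} (hm : m ≠ 0) (hn : n ≠ 0) :
    sigmaC w (m * n) = ∑ e ∈ (Nat.gcd m n).divisors,
      (moebius e : ℂ) * (e : ℂ) ^ w * sigmaC w (m / e) * sigmaC w (n / e) := by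
  rw [sigmaC_step1 w hm hn, Finset.sum_filter]
  have step2 : ∀ p ∈ m.divisors ×ˢ n.divisors,
      (if Nat.Coprime (m / p.1) p.2 then (p.1 : ℂ) ^ w * (p.2 : ℂ) ^ w else 0)
      = ∑ e ∈ (Nat.gcd (m / p.1) p.2).divisors,
          (moebius e : ℂ) * (p.1 : ℂ) ^ w * (p.2 : ℂ) ^ w := by
    intro p hp
    calc (if Nat.Coprime (m / p.1) p.2 then (p.1 : ℂ) ^ w * (p.2 : ℂ) ^ w else 0)
        = (if Nat.gcd (m / p.1) p.2 = 1 then (1:ℂ) else 0) * ((p.1 : ℂ) ^ w * (p.2 : ℂ) ^ w) := by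
          simp only [Nat.Coprime] at *
          split <;> simp
      _ = (∑ e ∈ (Nat.gcd (m / p.1) p.2).divisors, ((moebius e : ℤ) : ℂ))
            * ((p.1 : ℂ) ^ w * (p.2 : ℂ) ^ w) := by rw [sum_moebius_divisors]
      _ = _ := by rw [Finset.sum_mul]; exact Finset.sum_congr rfl fun e _ => by push_cast; ring
  rw [Finset.sum_congr rfl step2]
  rw [show (∑ x ∈ m.divisors ×ˢ n.divisors, ∑ e ∈ (Nat.gcd (m / x.1) x.2).divisors,
        ((moebius e : ℂ) * (x.1 : ℂ) ^ w * (x.2 : ℂ) ^ w))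
      = ∑ x ∈ (m.divisors ×ˢ n.divisors).sigma (fun p => (Nat.gcd (m / p.1) p.2).divisors),
        ((moebius x.2 : ℂ) * (x.1.1 : ℂ) ^ w * (x.1.2 : ℂ) ^ w) from
    Finset.sum_sigma' _ _ _]
  have rhs : ∀ e ∈ (Nat.gcd m n).divisors,
      (moebius e : ℂ) * (e : ℂ) ^ w * sigmaC w (m / e) * sigmaC w (n / e)
      = ∑ p ∈ (m / e).divisors ×ˢ (n / e).divisors,
          (moebius e : ℂ) * (e : ℂ) ^ w * (p.1 : ℂ) ^ w * (p.2 : ℂ) ^ w := by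
    intro e he
    rw [Finset.sum_product]
    simp only [sigmaC, Finset.mul_sum, Finset.sum_mul]
    exact Finset.sum_comm
  rw [Finset.sum_congr rfl rhs]
  rw [show (∑ e ∈ (Nat.gcd m n).divisors, ∑ p ∈ (m / e).divisors ×ˢ (n / e).divisors,
        ((moebius e : ℂ) * (e : ℂ) ^ w * (p.1 : ℂ) ^ w * (p.2 : ℂ) ^ w))
      = ∑ x ∈ (Nat.gcd m n).divisors.sigma (fun e => (m / e).divisors ×ˢ (n / e).divisors),
        ((moebius x.1 : ℂ) * (x.1 : ℂ) ^ w * (x.2.1 : ℂ) ^ w * (x.2.2 : ℂ) ^ w) from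
    Finset.sum_sigma' _ _ _]
  refine Finset.sum_nbij' (i := fun x => ⟨x.2, (x.1.1, x.1.2 / x.2)⟩)
    (j := fun y => ⟨(y.2.1, y.1 * y.2.2), y.1⟩) ?_ ?_ ?_ ?_ ?_
  · rintro ⟨⟨a, b⟩, e⟩ hx
    simp only [Finset.mem_sigma, Finset.mem_product, Nat.mem_divisors] at hx ⊢
    obtain ⟨⟨⟨ham, _⟩, ⟨hbn, _⟩⟩, hegcd, hgcd0⟩ := hx
    have hema : e ∣ m / a := (Nat.dvd_gcd_iff.mp hegcd).1
    have heb : e ∣ b := (Nat.dvd_gcd_iff.mp hegcd).2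
    have hem : e ∣ m := hema.trans (Nat.div_dvd_of_dvd ham)
    have hen : e ∣ n := heb.trans hbn
    have hme0 : m / e ≠ 0 := fun h => hm (by rw [← Nat.mul_div_cancel' hem, h, mul_zero])
    have hne0 : n / e ≠ 0 := fun h => hn (by rw [← Nat.mul_div_cancel' hen, h, mul_zero])
    refine ⟨⟨Nat.dvd_gcd hem hen, fun h => hm (Nat.eq_zero_of_gcd_eq_zero_left h)⟩,
      ⟨(Nat.dvd_div_iff_mul_dvd hem).mpr ?_, hme0⟩,
      ⟨(Nat.dvd_div_iff_mul_dvd hen).mpr ?_, hne0⟩⟩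
    · rw [mul_comm]; exact (Nat.dvd_div_iff_mul_dvd ham).mp hema
    · rw [Nat.mul_div_cancel' heb]; exact hbn
  · rintro ⟨e, a, b'⟩ hy
    simp only [Finset.mem_sigma, Finset.mem_product, Nat.mem_divisors] at hy ⊢
    obtain ⟨⟨hegcd, _⟩, ⟨hame, hme0⟩, ⟨hbne, hne0⟩⟩ := hy
    have hem : e ∣ m := (Nat.dvd_gcd_iff.mp hegcd).1
    have hen : e ∣ n := (Nat.dvd_gcd_iff.mp hegcd).2
    have he0 : e ≠ 0 := fun h => hm (by rw [← Nat.mul_div_cancel' hem, h, zero_mul])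
    have hb0 : b' ≠ 0 := fun h => hne0 (Nat.eq_zero_of_zero_dvd (h ▸ hbne))
    have ham : a ∣ m := hame.trans (Nat.div_dvd_of_dvd hem)
    have hebn : e * b' ∣ n := (Nat.dvd_div_iff_mul_dvd hen).mp hbne
    refine ⟨⟨⟨ham, hm⟩, ⟨hebn, hn⟩⟩, Nat.dvd_gcd ?_ (dvd_mul_right e b'),
      fun h => (mul_ne_zero he0 hb0) (Nat.eq_zero_of_gcd_eq_zero_right h)⟩
    · rw [Nat.dvd_div_iff_mul_dvd ham, mul_comm]
      exact (Nat.dvd_div_iff_mul_dvd hem).mp hame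
  · rintro ⟨⟨a, b⟩, e⟩ hx
    simp only [Finset.mem_sigma, Finset.mem_product, Nat.mem_divisors] at hx
    have heb : e ∣ b := (Nat.dvd_gcd_iff.mp hx.2.1).2
    simp [Nat.mul_div_cancel' heb]
  · rintro ⟨e, a, b'⟩ hy
    simp only [Finset.mem_sigma, Finset.mem_product, Nat.mem_divisors] at hy
    have hem : e ∣ m := (Nat.dvd_gcd_iff.mp hy.1.1).1
    have he0 : e ≠ 0 := fun h => hm (by rw [← Nat.mul_div_cancel' hem, h, zero_mul])
    simp [Nat.mul_div_cancel_left _ (Nat.pos_of_ne_zero he0)]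
  · rintro ⟨⟨a, b⟩, e⟩ hx
    simp only [Finset.mem_sigma, Finset.mem_product, Nat.mem_divisors] at hx
    have heb : e ∣ b := (Nat.dvd_gcd_iff.mp hx.2.1).2
    have hb : (b : ℂ) ^ w = (e : ℂ) ^ w * ((b / e : ℕ) : ℂ) ^ w := by
      conv_lhs => rw [← Nat.mul_div_cancel' heb]
      push_cast
      rw [Complex.natCast_mul_natCast_cpow]
    simp only [hb]; ring

lemma hasSum_sigmaC (w s : ℂ) (hs1 : 1 < s.re) (hsw : 1 < (s - w).re) :
    HasSum (LSeries.term (sigmaC w) s) (riemannZeta s * riemannZeta (s - w)) := by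
  have hpw : LSeriesHasSum (fun n : ℕ => (n : ℂ) ^ w) s (riemannZeta (s - w)) := by
    have hterm : LSeries.term (fun n : ℕ => (n : ℂ) ^ w) s
        = LSeries.term 1 (s - w) := by
      funext n
      rcases eq_or_ne n 0 with rfl | hn
      · simp
      · have hn' : (n : ℂ) ≠ 0 := Nat.cast_ne_zero.mpr hn
        rw [LSeries.term_of_ne_zero hn, LSeries.term_of_ne_zero hn, Pi.one_apply,
          Complex.cpow_sub _ _ hn', one_div_div]
    unfold LSeriesHasSum
    rw [hterm]
    exact LSeriesHasSum_one hsw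
  have h1 : LSeriesHasSum (fun _ : ℕ => (1 : ℂ)) s (riemannZeta s) := LSeriesHasSum_one hs1
  have := h1.convolution hpw
  rwa [← sigmaC_eq_conv] at this

lemma cpow_prefactor (s : ℂ) (X : ℂ) (σf : ℕ → ℂ) (hσ0 : σf 0 = 0) (k : ℕ) :
    σf k / (X * (k : ℂ) ^ s) = X⁻¹ * (LSeries.term σf s k) := by
  rcases eq_or_ne k 0 with rfl | hk
  · simp [hσ0]
  · rw [LSeries.term_of_ne_zero hk, div_mul_eq_div_div_swap, div_eq_inv_mul]

lemma cpow_ne_zero' {e : ℕ} (he : e ≠ 0) (s : ℂ) : (e : ℂ) ^ s ≠ 0 := by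
  intro h
  rcases (Complex.cpow_eq_zero_iff _ _).mp h with ⟨h1, _⟩
  exact Nat.cast_ne_zero.mpr he h1

lemma final_value (w s : ℂ) {e f : ℕ} (he : e ≠ 0) (hf : f ≠ 0) (A B C : ℂ) :
    A * ((e * f : ℕ) : ℂ) * (B * (e : ℂ) ^ w * C * ((((e * f : ℕ)) : ℂ) ^ s * (e : ℂ) ^ s)⁻¹)
      = B * (e : ℂ) ^ (1 + w - 2 * s) * (A * (f : ℂ) ^ (1 - s) * C) := by
  have he' : (e : ℂ) ≠ 0 := Nat.cast_ne_zero.mpr he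
  have hf' : (f : ℂ) ≠ 0 := Nat.cast_ne_zero.mpr hf
  rw [Nat.cast_mul, Complex.natCast_mul_natCast_cpow]
  have h1 : (e : ℂ) ^ (1 + w - 2 * s) = (e : ℂ) * (e : ℂ) ^ w / ((e : ℂ) ^ s * (e : ℂ) ^ s) := by
    rw [Complex.cpow_sub _ _ he', Complex.cpow_add _ _ he', Complex.cpow_one,
      show (2 : ℂ) * s = s + s by ring, Complex.cpow_add _ _ he']
  have h2 : (f : ℂ) ^ (1 - s) = (f : ℂ) / (f : ℂ) ^ s := by
    rw [Complex.cpow_sub _ _ hf', Complex.cpow_one]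
  rw [h1, h2]
  have hes := cpow_ne_zero' he s
  have hfs := cpow_ne_zero' hf s
  field_simp

lemma tsum_term_mul (w s : ℂ) (hT : Summable (LSeries.term (sigmaC w) s)) {d : ℕ}
    (hd : d ≠ 0) :
    ∑' m : ℕ, LSeries.term (sigmaC w) s (d * m)
      = (∑ e ∈ d.divisors, (moebius e : ℂ) * (e : ℂ) ^ w * sigmaC w (d / e) *
          (((d : ℂ) ^ s * (e : ℂ) ^ s)⁻¹)) * ∑' k : ℕ, LSeries.term (sigmaC w) s k := by
  set T := LSeries.term (sigmaC w) s with hTdef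
  set G : ℕ → ℕ → ℂ := fun e m => (moebius e : ℂ) * (e : ℂ) ^ w * sigmaC w (d / e) *
    (if e ∣ m then sigmaC w (m / e) / ((d * m : ℕ) : ℂ) ^ s else 0) with hGdef
  have hstep : ∀ m : ℕ, T (d * m) = ∑ e ∈ d.divisors, G e m := by
    intro m
    rcases eq_or_ne m 0 with rfl | hm
    · simp [hTdef, hGdef, sigmaC_zero]
    · rw [hTdef, LSeries.term_of_ne_zero (mul_ne_zero hd hm), sigmaC_mul w hd hm,
        Finset.sum_div, gcd_divisors hd m, Finset.sum_filter]
      refine Finset.sum_congr rfl fun e he => ?_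
      simp only [hGdef]
      split_ifs with h
      · rw [mul_div_assoc]
      · rw [mul_zero]
  have hG : ∀ e ∈ d.divisors, HasSum (G e)
      ((moebius e : ℂ) * (e : ℂ) ^ w * sigmaC w (d / e) * ((d : ℂ) ^ s * (e : ℂ) ^ s)⁻¹
        * ∑' k : ℕ, T k) := by
    intro e he
    obtain ⟨hed, hd0⟩ := Nat.mem_divisors.mp he
    have he0 : e ≠ 0 := fun h => hd0 (Nat.eq_zero_of_zero_dvd (h ▸ hed))
    have hinj : Function.Injective (fun k : ℕ => e * k) :=
      fun a b h => Nat.eq_of_mul_eq_mul_left (Nat.pos_of_ne_zero he0) h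
    have hvan : ∀ m ∉ Set.range (fun k : ℕ => e * k), G e m = 0 := by
      intro m hm
      have : ¬ e ∣ m := by
        intro ⟨k, hk⟩; exact hm ⟨k, hk.symm⟩
      simp [hGdef, this]
    have hcomp : (G e) ∘ (fun k : ℕ => e * k)
        = fun k => ((moebius e : ℂ) * (e : ℂ) ^ w * sigmaC w (d / e) *
            ((d : ℂ) ^ s * (e : ℂ) ^ s)⁻¹) * T k := by
      funext k
      simp only [Function.comp_apply, hGdef, dvd_mul_right, if_pos,
        Nat.mul_div_cancel_left _ (Nat.pos_of_ne_zero he0)]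
      have hX : ((d * (e * k) : ℕ) : ℂ) ^ s = ((d : ℂ) ^ s * (e : ℂ) ^ s) * (k : ℂ) ^ s := by
        rw [Nat.cast_mul, Complex.natCast_mul_natCast_cpow, Nat.cast_mul,
          Complex.natCast_mul_natCast_cpow, mul_assoc]
      rw [hX, cpow_prefactor s _ _ (sigmaC_zero w) k]
      ring
    have hsum : HasSum ((G e) ∘ (fun k : ℕ => e * k))
        ((moebius e : ℂ) * (e : ℂ) ^ w * sigmaC w (d / e) *
          ((d : ℂ) ^ s * (e : ℂ) ^ s)⁻¹ * ∑' k : ℕ, T k) := by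
      rw [hcomp]
      exact hT.hasSum.mul_left _
    exact (hinj.hasSum_iff hvan).mp hsum
  calc ∑' m : ℕ, T (d * m) = ∑' m : ℕ, ∑ e ∈ d.divisors, G e m := by
        exact tsum_congr hstep
    _ = ∑ e ∈ d.divisors, ∑' m : ℕ, G e m :=
        Summable.tsum_finsetSum fun e he => (hG e he).summable
    _ = ∑ e ∈ d.divisors, ((moebius e : ℂ) * (e : ℂ) ^ w * sigmaC w (d / e) *
          ((d : ℂ) ^ s * (e : ℂ) ^ s)⁻¹ * ∑' k : ℕ, T k) :=
        Finset.sum_congr rfl fun e he => (hG e he).tsum_eq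
    _ = _ := by rw [← Finset.sum_mul]

/-- Dirichlet series evaluation of σ_w(n) r_q(n), where
r_q(n) = ∑_{d | gcd(n,q)} μ(q/d) d is the Ramanujan sum. -/
theorem dirichlet_series_sigma_ramanujan (q : ℕ) (hq : 0 < q) (w s : ℂ)
    (hs : 1 + max w.re 0 < s.re) :
    ∑' n : ℕ, (sigmaC w n / (n : ℂ) ^ s) *
        (∑ d ∈ (Nat.gcd n q).divisors, (moebius (q / d) : ℂ) * (d : ℂ)) =
      riemannZeta s * riemannZeta (s - w) *
        ∑ c ∈ q.divisors, (moebius c : ℂ) * (c : ℂ) ^ (1 + w - 2 * s) *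
          ∑ d ∈ (q / c).divisors, (moebius (q / (c * d)) : ℂ) * (d : ℂ) ^ (1 - s) *
            sigmaC w d := by
  have hs1 : 1 < s.re := by have := le_max_right w.re 0; linarith
  have hsw : 1 < (s - w).re := by
    have := le_max_left w.re 0
    rw [Complex.sub_re]; linarith
  have hZ := hasSum_sigmaC w s hs1 hsw
  set T := LSeries.term (sigmaC w) s with hTdef
  have hT : Summable T := hZ.summable
  have hZval : (∑' k : ℕ, T k) = riemannZeta s * riemannZeta (s - w) := hZ.tsum_eq
  have hRn : ∀ n : ℕ, (sigmaC w n / (n : ℂ) ^ s) *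
      (∑ d ∈ (Nat.gcd n q).divisors, (moebius (q / d) : ℂ) * (d : ℂ))
      = ∑ d ∈ q.divisors, (if d ∣ n then ((moebius (q / d) : ℂ) * d) * T n else 0) := by
    intro n
    have h1 : sigmaC w n / (n : ℂ) ^ s = T n := by
      rcases eq_or_ne n 0 with rfl | hn
      · simp [hTdef, sigmaC_zero]
      · rw [hTdef, LSeries.term_of_ne_zero hn]
    rw [Nat.gcd_comm n q, gcd_divisors hq.ne' n, Finset.sum_filter, h1, mul_comm,
      Finset.sum_mul]
    refine Finset.sum_congr rfl fun d hd => ?_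
    split_ifs with h
    · ring
    · rw [zero_mul]
  rw [tsum_congr hRn]
  have hFsummable : ∀ d ∈ q.divisors,
      Summable (fun n => if d ∣ n then ((moebius (q / d) : ℂ) * d) * T n else 0) := by
    intro d _
    have hg : Summable (fun n => ‖(moebius (q / d) : ℂ) * (d : ℂ)‖ * ‖T n‖) :=
      hT.norm.mul_left _
    refine Summable.of_norm_bounded hg fun n => ?_
    split_ifs with h
    · rw [norm_mul]
    · simp only [norm_zero]
      positivity
  rw [Summable.tsum_finsetSum hFsummable]
  have hper : ∀ d ∈ q.divisors,
      (∑' n : ℕ, if d ∣ n then ((moebius (q / d) : ℂ) * d) * T n else 0)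
      = ((moebius (q / d) : ℂ) * d) *
          ((∑ e ∈ d.divisors, (moebius e : ℂ) * (e : ℂ) ^ w * sigmaC w (d / e) *
            (((d : ℂ) ^ s * (e : ℂ) ^ s)⁻¹)) * (riemannZeta s * riemannZeta (s - w))) := by
    intro d hd
    obtain ⟨hdq, hq0⟩ := Nat.mem_divisors.mp hd
    have hd0 : d ≠ 0 := fun h => hq0 (Nat.eq_zero_of_zero_dvd (h ▸ hdq))
    set F : ℕ → ℂ := fun n => if d ∣ n then ((moebius (q / d) : ℂ) * d) * T n else 0 with hFdef
    have hinj : Function.Injective (fun m : ℕ => d * m) :=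
      fun a b h => Nat.eq_of_mul_eq_mul_left (Nat.pos_of_ne_zero hd0) h
    have hvan : ∀ n ∉ Set.range (fun m : ℕ => d * m), F n = 0 := by
      intro n hn
      have : ¬ d ∣ n := by intro ⟨k, hk⟩; exact hn ⟨k, hk.symm⟩
      simp [hFdef, this]
    have h2 : (∑' n : ℕ, F n) = ∑' m : ℕ, F (d * m) :=
      (((hinj.hasSum_iff hvan).mpr (hFsummable d hd).hasSum).tsum_eq).symm
    have h3 : ∀ m : ℕ, F (d * m) = ((moebius (q / d) : ℂ) * d) * T (d * m) := by
      intro m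
      simp [hFdef, dvd_mul_right]
    rw [h2, tsum_congr h3, tsum_mul_left, tsum_term_mul w s hT hd0, hZval]
  rw [Finset.sum_congr rfl hper]
  set Z := riemannZeta s * riemannZeta (s - w)
  have hL : (∑ d ∈ q.divisors, ((moebius (q / d) : ℂ) * d) *
        ((∑ e ∈ d.divisors, (moebius e : ℂ) * (e : ℂ) ^ w * sigmaC w (d / e) *
          (((d : ℂ) ^ s * (e : ℂ) ^ s)⁻¹)) * Z))
      = Z * ∑ d ∈ q.divisors, ∑ e ∈ d.divisors, ((moebius (q / d) : ℂ) * d) *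
          ((moebius e : ℂ) * (e : ℂ) ^ w * sigmaC w (d / e) *
            (((d : ℂ) ^ s * (e : ℂ) ^ s)⁻¹)) := by
    simp only [Finset.mul_sum, Finset.sum_mul]
    exact Finset.sum_congr rfl fun d _ => Finset.sum_congr rfl fun e _ => by ring
  have hR : (∑ c ∈ q.divisors, (moebius c : ℂ) * (c : ℂ) ^ (1 + w - 2 * s) *
        ∑ f ∈ (q / c).divisors, (moebius (q / (c * f)) : ℂ) * (f : ℂ) ^ (1 - s) * sigmaC w f)
      = ∑ c ∈ q.divisors, ∑ f ∈ (q / c).divisors, (moebius c : ℂ) * (c : ℂ) ^ (1 + w - 2 * s) *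
          ((moebius (q / (c * f)) : ℂ) * (f : ℂ) ^ (1 - s) * sigmaC w f) :=
    Finset.sum_congr rfl fun c _ => by rw [Finset.mul_sum]
  rw [hL, hR]
  congr 1
  rw [Finset.sum_sigma' q.divisors (fun d => d.divisors)
      (fun d e => ((moebius (q / d) : ℂ) * d) * ((moebius e : ℂ) * (e : ℂ) ^ w *
        sigmaC w (d / e) * (((d : ℂ) ^ s * (e : ℂ) ^ s)⁻¹))),
    Finset.sum_sigma' q.divisors (fun c => (q / c).divisors)
      (fun c f => (moebius c : ℂ) * (c : ℂ) ^ (1 + w - 2 * s) *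
        ((moebius (q / (c * f)) : ℂ) * (f : ℂ) ^ (1 - s) * sigmaC w f))]
  refine Finset.sum_nbij' (i := fun x => ⟨x.2, x.1 / x.2⟩)
    (j := fun y => ⟨y.1 * y.2, y.1⟩) ?_ ?_ ?_ ?_ ?_
  · rintro ⟨d, e⟩ hx
    simp only [Finset.mem_sigma, Nat.mem_divisors] at hx ⊢
    obtain ⟨⟨hdq, hq0⟩, hed, hd0⟩ := hx
    have he0 : e ≠ 0 := fun h => hd0 (Nat.eq_zero_of_zero_dvd (h ▸ hed))
    have heq : e ∣ q := hed.trans hdq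
    have hqe0 : q / e ≠ 0 := fun h => hq0 (by rw [← Nat.mul_div_cancel' heq, h, mul_zero])
    refine ⟨⟨heq, hq0⟩, (Nat.dvd_div_iff_mul_dvd heq).mpr ?_, hqe0⟩
    rw [Nat.mul_div_cancel' hed]; exact hdq
  · rintro ⟨c, f⟩ hy
    simp only [Finset.mem_sigma, Nat.mem_divisors] at hy ⊢
    obtain ⟨⟨hcq, hq0⟩, hfqc, hqc0⟩ := hy
    have hc0 : c ≠ 0 := fun h => hq0 (Nat.eq_zero_of_zero_dvd (h ▸ hcq))
    have hf0 : f ≠ 0 := fun h => hqc0 (Nat.eq_zero_of_zero_dvd (h ▸ hfqc))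
    exact ⟨⟨(Nat.dvd_div_iff_mul_dvd hcq).mp hfqc, hq0⟩, dvd_mul_right c f,
      mul_ne_zero hc0 hf0⟩
  · rintro ⟨d, e⟩ hx
    simp only [Finset.mem_sigma, Nat.mem_divisors] at hx
    have hed : e ∣ d := hx.2.1
    simp [Nat.mul_div_cancel' hed]
  · rintro ⟨c, f⟩ hy
    simp only [Finset.mem_sigma, Nat.mem_divisors] at hy
    have hc0 : c ≠ 0 := fun h => hy.1.2 (Nat.eq_zero_of_zero_dvd (h ▸ hy.1.1))
    simp [Nat.mul_div_cancel_left _ (Nat.pos_of_ne_zero hc0)]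
  · rintro ⟨d, e⟩ hx
    simp only [Finset.mem_sigma, Nat.mem_divisors] at hx
    obtain ⟨⟨hdq, hq0⟩, hed, hd0⟩ := hx
    have he0 : e ≠ 0 := fun h => hd0 (Nat.eq_zero_of_zero_dvd (h ▸ hed))
    obtain ⟨f, rfl⟩ := hed
    have hf0 : f ≠ 0 := fun h => hd0 (by rw [h, mul_zero])
    have hdiv : e * f / e = f := Nat.mul_div_cancel_left _ (Nat.pos_of_ne_zero he0)
    simp only [hdiv]
    exact final_value w s he0 hf0 _ _ _
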